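/- Let ω : E_k^t → E_k with d(ω) ≤ D, let h_1, ..., h_t : E_k^n → E_k be monotone, and let g : E_k^{n+1} → E_k satisfy d(g) ≤ M. Define f(x) = g(ω(h_1(x), ..., h_t(x)), x). Then d(f) ≤ (D + 1)(M + 1) - 1. -/

import Mathlib

/-- A chain in `E_k^n`: pairwise distinct tuples increasing coordinatewise,
    i.e. strictly increasing in the coordinatewise (product) order. -/
def IsChainE {n k : ℕ} (C : List (Fin n → Fin k)) : Prop :=
  C.Chain' (· < ·)

/-- The decrease `d_C(f)` of `f` over a chain `C`: number of consecutive
    pairs on which `f` strictly decreases. -/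
def decC {n k : ℕ} (f : (Fin n → Fin k) → Fin k) (C : List (Fin n → Fin k)) : ℕ :=
  (C.zip C.tail).countP (fun p => decide (f p.2 < f p.1))

/-- The decrease `d(f)` of `f`: maximum of `d_C(f)` over all chains `C`. -/
noncomputable def dF {n k : ℕ} (f : (Fin n → Fin k) → Fin k) : ℕ :=
  sSup {m : ℕ | ∃ C : List (Fin n → Fin k), IsChainE C ∧ decC f C = m}


lemma decC_le_card {n k : ℕ} (f : (Fin n → Fin k) → Fin k) (C : List (Fin n → Fin k))
    (hC : IsChainE C) : decC f C ≤ Fintype.card (Fin n → Fin k) := by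
  have h1 : decC f C ≤ (C.zip C.tail).length := List.countP_le_length
  have h2 : (C.zip C.tail).length ≤ C.length := by
    rw [List.length_zip]; exact min_le_left _ _
  have h3 : C.Nodup := ((List.isChain_iff_pairwise).1 hC).imp ne_of_lt
  exact h1.trans (h2.trans h3.length_le_card)

lemma bdd {n k : ℕ} (f : (Fin n → Fin k) → Fin k) :
    BddAbove {m : ℕ | ∃ C : List (Fin n → Fin k), IsChainE C ∧ decC f C = m} := by
  refine ⟨Fintype.card (Fin n → Fin k), ?_⟩
  rintro m ⟨C, hC, rfl⟩
  exact decC_le_card f C hC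

lemma le_dF {n k : ℕ} (f : (Fin n → Fin k) → Fin k) (C : List (Fin n → Fin k))
    (hC : IsChainE C) : decC f C ≤ dF f :=
  le_csSup (bdd f) ⟨C, hC, rfl⟩

lemma dF_le {n k : ℕ} (f : (Fin n → Fin k) → Fin k) (B : ℕ)
    (hB : ∀ C, IsChainE C → decC f C ≤ B) : dF f ≤ B :=
  csSup_le ⟨0, [], List.isChain_nil, rfl⟩ (by rintro m ⟨C, hC, rfl⟩; exact hB C hC)

lemma decC_cons2 {n k : ℕ} (f : (Fin n → Fin k) → Fin k) (a b : Fin n → Fin k)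
    (l : List (Fin n → Fin k)) :
    decC f (a :: b :: l) = decC f (b :: l) + (if f b < f a then 1 else 0) := by
  simp [decC, List.countP_cons]

lemma decC_single {n k : ℕ} (f : (Fin n → Fin k) → Fin k) (a : Fin n → Fin k) :
    decC f [a] = 0 := by simp [decC]

lemma cons_lt_cons {n k : ℕ} {a a' : Fin k} {x x' : Fin n → Fin k}
    (ha : a ≤ a') (hx : x < x') : (Fin.cons a x : Fin (n+1) → Fin k) < Fin.cons a' x' := by
  have hle : (Fin.cons a x : Fin (n+1) → Fin k) ≤ Fin.cons a' x' := by
    intro i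
    refine Fin.cases ?_ ?_ i
    · simpa using ha
    · intro j; simpa using hx.le j
  refine lt_of_le_of_ne hle ?_
  intro hEq
  apply hx.ne
  funext j
  have := congrFun hEq j.succ
  simpa using this

lemma exists_chain_comp {n t k : ℕ} (ω : (Fin t → Fin k) → Fin k)
    (H : (Fin n → Fin k) → (Fin t → Fin k)) (hH : Monotone H) :
    ∀ C : List (Fin n → Fin k), IsChainE C →
      ∃ C' : List (Fin t → Fin k), C'.Chain' (· < ·) ∧
        decC ω C' = decC (fun x => ω (H x)) C ∧ C'.head? = (C.map H).head? := by
  intro C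
  induction C with
  | nil => exact fun _ => ⟨[], List.isChain_nil, by simp [decC], rfl⟩
  | cons a tl ih =>
    cases tl with
    | nil => exact fun _ => ⟨[H a], List.isChain_singleton _, by simp [decC], rfl⟩
    | cons b l =>
      intro hC
      obtain ⟨hab, hC'⟩ := List.isChain_cons_cons.1 hC
      obtain ⟨C', hch, hdec, hhead⟩ := ih hC'
      cases C' with
      | nil => simp at hhead
      | cons c cs =>
        have hc : c = H b := by simpa using hhead
        subst hc
        rcases (hH hab.le).lt_or_eq with hlt | heq
        · refine ⟨H a :: H b :: cs, List.isChain_cons_cons.2 ⟨hlt, hch⟩, ?_, by simp⟩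
          rw [decC_cons2, decC_cons2, hdec]
        · refine ⟨H b :: cs, hch, ?_, by simp [heq]⟩
          rw [decC_cons2 (fun x => ω (H x)) a b l, hdec]
          simp [heq]

lemma main_ind {n k M : ℕ} (ψ : (Fin n → Fin k) → Fin k)
    (g : (Fin (n+1) → Fin k) → Fin k) (hg : dF g ≤ M) :
    ∀ (C : List (Fin n → Fin k)), IsChainE C → C ≠ [] →
      ∃ C' : List (Fin (n+1) → Fin k), IsChainE C' ∧
        C'.head? = (C.map (fun x => Fin.cons (ψ x) x)).head? ∧
        decC (fun x => g (Fin.cons (ψ x) x)) C ≤ decC ψ C * (M+1) + decC g C' := by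
  intro C
  induction C with
  | nil => exact fun _ h => absurd rfl h
  | cons a tl ih =>
    cases tl with
    | nil =>
      intro _ _
      exact ⟨[Fin.cons (ψ a) a], List.isChain_singleton _, rfl,
        by simp [decC_single]⟩
    | cons b l =>
      intro hC _
      obtain ⟨hab, hC'⟩ := List.isChain_cons_cons.1 hC
      obtain ⟨C', hch, hhead, hdec⟩ := ih hC' (by simp)
      cases C' with
      | nil => simp at hhead
      | cons c cs =>
        have hc : c = Fin.cons (ψ b) b := by simpa using hhead
        subst hc
        set f := fun x => g (Fin.cons (ψ x) x) with hf
        rcases le_or_gt (ψ a) (ψ b) with hle | hlt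
        · refine ⟨Fin.cons (ψ a) a :: Fin.cons (ψ b) b :: cs,
            List.isChain_cons_cons.2 ⟨cons_lt_cons hle hab, hch⟩, by simp, ?_⟩
          rw [decC_cons2 f a b l, decC_cons2 ψ a b l, decC_cons2 g]
          have hψ : (if ψ b < ψ a then 1 else 0) = 0 := by
            simp [not_lt.2 hle]
          have hgf : (if g (Fin.cons (ψ b) b) < g (Fin.cons (ψ a) a) then 1 else 0)
              = (if f b < f a then 1 else 0) := rfl
          rw [hψ, hgf]
          have : decC ψ (b :: l) * (M + 1) + decC g (Fin.cons (ψ b) b :: cs)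
              + (if f b < f a then 1 else 0)
              = (decC ψ (b :: l) + 0) * (M + 1)
              + (decC g (Fin.cons (ψ b) b :: cs) + (if f b < f a then 1 else 0)) := by ring
          omega
        · refine ⟨[Fin.cons (ψ a) a], List.isChain_singleton _, by simp, ?_⟩
          have hgM : decC g (Fin.cons (ψ b) b :: cs) ≤ M := (le_dF g _ hch).trans hg
          rw [decC_cons2 f a b l, decC_cons2 ψ a b l, decC_single]
          have hψ : (if ψ b < ψ a then 1 else 0) = 1 := by simp [hlt]
          rw [hψ]
          have hδ : (if f b < f a then 1 else 0) ≤ 1 := by split <;> omega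
          have : (decC ψ (b :: l) + 1) * (M + 1)
              = decC ψ (b :: l) * (M + 1) + M + 1 := by ring
          omega

/-- If `d(ω) ≤ D`, the `h_i` are monotone and `d(g) ≤ M`, then
    `f(x) = g(ω(h₁(x),...,h_t(x)), x)` satisfies `d(f) ≤ (D+1)(M+1) - 1`. -/
theorem stmt8 {n t k D M : ℕ} (ω : (Fin t → Fin k) → Fin k) (hω : dF ω ≤ D)
    (h : Fin t → (Fin n → Fin k) → Fin k) (hh : ∀ i, Monotone (h i))
    (g : (Fin (n + 1) → Fin k) → Fin k) (hg : dF g ≤ M) :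
    dF (fun x => g (Fin.cons (ω (fun i => h i x)) x)) ≤ (D + 1) * (M + 1) - 1 := by
  refine dF_le _ _ ?_
  intro C hC
  cases C with
  | nil => simp [decC]
  | cons a tl =>
    obtain ⟨C', hch, hhead, hdec⟩ :=
      main_ind (fun x => ω (fun i => h i x)) g hg (a :: tl) hC (by simp)
    have hψD : decC (fun x => ω (fun i => h i x)) (a :: tl) ≤ D := by
      obtain ⟨Cω, hCω, hωeq, _⟩ := exists_chain_comp ω (fun x i => h i x)
        (fun _ _ hxy i => hh i hxy) (a :: tl) hC
      calc decC (fun x => ω (fun i => h i x)) (a :: tl) = decC ω Cω := hωeq.symm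
        _ ≤ dF ω := le_dF ω Cω hCω
        _ ≤ D := hω
    have hgM : decC g C' ≤ M := (le_dF g C' hch).trans hg
    have hr : (D + 1) * (M + 1) = D * (M + 1) + M + 1 := by ring
    have hmul : decC (fun x => ω (fun i => h i x)) (a :: tl) * (M + 1) ≤ D * (M + 1) :=
      Nat.mul_le_mul_right _ hψD
    omega
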